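/- Let A₁, A₂ be real square matrices with ψ(A₁) ≤ ψ(A₂) entrywise. If ψ(A₂) is Hurwitz then ψ(A₁) is Hurwitz. -/

import Mathlib

open scoped ENNReal
open Filter

noncomputable def metzlerPart {n : ℕ} (A : Matrix (Fin n) (Fin n) ℝ) : Matrix (Fin n) (Fin n) ℝ :=
  Matrix.of fun i j => if i = j then A i j else |A i j|

def Hurwitz {n : ℕ} (A : Matrix (Fin n) (Fin n) ℝ) : Prop :=
  ∀ μ ∈ spectrum ℂ (A.map (Complex.ofReal)), μ.re < 0

attribute [local instance] Matrix.linftyOpNormedRing Matrix.linftyOpNormedAlgebra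

section aux

variable {n : ℕ}

lemma pow_entry_nonneg_mono {B₁ B₂ : Matrix (Fin n) (Fin n) ℝ}
    (h0 : ∀ i j, 0 ≤ B₁ i j) (h12 : ∀ i j, B₁ i j ≤ B₂ i j) (k : ℕ) :
    (∀ i j, 0 ≤ (B₁ ^ k) i j) ∧ (∀ i j, (B₁ ^ k) i j ≤ (B₂ ^ k) i j) := by
  induction k with
  | zero =>
    refine ⟨fun i j => ?_, fun i j => le_refl _⟩
    simp only [pow_zero, Matrix.one_apply]
    positivity
  | succ k ih =>
    obtain ⟨ihn, ihm⟩ := ih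
    constructor <;> intro i j <;>
      simp only [pow_succ, Matrix.mul_apply]
    · exact Finset.sum_nonneg fun l _ => mul_nonneg (ihn i l) (h0 l j)
    · exact Finset.sum_le_sum fun l _ => mul_le_mul (ihm i l) (h12 l j) (h0 l j)
        ((ihn i l).trans (ihm i l))

lemma nnnorm_map_le {X Y : Matrix (Fin n) (Fin n) ℝ}
    (h0 : ∀ i j, 0 ≤ X i j) (hXY : ∀ i j, X i j ≤ Y i j) :
    ‖X.map (Complex.ofReal)‖₊ ≤ ‖Y.map (Complex.ofReal)‖₊ := by
  rw [Matrix.linfty_opNNNorm_def, Matrix.linfty_opNNNorm_def]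
  refine Finset.sup_mono_fun fun i _ => Finset.sum_le_sum fun j _ => ?_
  simp only [Matrix.map_apply, Complex.nnnorm_real]
  have h1 : |X i j| ≤ |Y i j| := by
    rw [abs_of_nonneg (h0 i j), abs_of_nonneg ((h0 i j).trans (hXY i j))]
    exact hXY i j
  exact NNReal.coe_le_coe.mp (by simpa [coe_nnnorm, Real.norm_eq_abs] using h1)

end aux

section aux2
variable {n : ℕ}

lemma specRadius_mono {B₁ B₂ : Matrix (Fin n) (Fin n) ℝ}
    (h0 : ∀ i j, 0 ≤ B₁ i j) (h12 : ∀ i j, B₁ i j ≤ B₂ i j) :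
    spectralRadius ℂ (B₁.map Complex.ofReal) ≤ spectralRadius ℂ (B₂.map Complex.ofReal) := by
  have t1 := spectrum.pow_nnnorm_pow_one_div_tendsto_nhds_spectralRadius
    (B₁.map Complex.ofReal)
  have t2 := spectrum.pow_nnnorm_pow_one_div_tendsto_nhds_spectralRadius
    (B₂.map Complex.ofReal)
  refine le_of_tendsto_of_tendsto' t1 t2 fun k => ?_
  have hmap : ∀ (B : Matrix (Fin n) (Fin n) ℝ),
      (B.map Complex.ofReal) ^ k = (B ^ k).map Complex.ofReal := by
    intro B
    have := map_pow (Complex.ofRealHom.mapMatrix) B k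
    exact this.symm
  rw [hmap, hmap]
  have := nnnorm_map_le (pow_entry_nonneg_mono h0 h12 k).1 (pow_entry_nonneg_mono h0 h12 k).2
  exact ENNReal.rpow_le_rpow (by exact_mod_cast this) (by positivity)
end aux2

section aux3
variable {n : ℕ} [Nonempty (Fin n)]

lemma map_add_smul_one (M : Matrix (Fin n) (Fin n) ℝ) (s : ℝ) :
    (M + s • (1 : Matrix (Fin n) (Fin n) ℝ)).map Complex.ofReal
      = algebraMap ℂ (Matrix (Fin n) (Fin n) ℂ) (s : ℂ) + M.map Complex.ofReal := by
  ext i j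
  simp [Matrix.map_apply, Matrix.add_apply, Matrix.smul_apply, Matrix.one_apply,
    Matrix.algebraMap_matrix_apply, apply_ite Complex.ofReal, add_comm]

lemma key_ineq {M₁ M₂ : Matrix (Fin n) (Fin n) ℝ}
    (hd : ∀ i j, i ≠ j → 0 ≤ M₁ i j) (h12 : ∀ i j, M₁ i j ≤ M₂ i j)
    {μ ν₀ : ℂ} (hμ : μ ∈ spectrum ℂ (M₁.map Complex.ofReal))
    (hν₀ : ν₀ ∈ spectrum ℂ (M₂.map Complex.ofReal))
    (hmax : ∀ ν ∈ spectrum ℂ (M₂.map Complex.ofReal), ν.re ≤ ν₀.re)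
    {s : ℝ} (hs0 : 0 ≤ s) (hs : ∀ i, 0 ≤ M₁ i i + s) :
    (s + μ.re)^2 ≤ ‖M₂.map Complex.ofReal‖^2 + 2*s*ν₀.re + s^2 := by
  set R : ℝ := ‖M₂.map Complex.ofReal‖ with hR
  set B₁ : Matrix (Fin n) (Fin n) ℝ := M₁ + s • 1 with hB₁
  set B₂ : Matrix (Fin n) (Fin n) ℝ := M₂ + s • 1 with hB₂
  have hB₁0 : ∀ i j, 0 ≤ B₁ i j := by
    intro i j
    by_cases hij : i = j
    · subst hij; simpa [hB₁, Matrix.add_apply, Matrix.smul_apply, Matrix.one_apply] using hs i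
    · simpa [hB₁, Matrix.add_apply, Matrix.smul_apply, Matrix.one_apply, hij] using hd i j hij
  have hB₁₂ : ∀ i j, B₁ i j ≤ B₂ i j := by
    intro i j
    simp only [hB₁, hB₂, Matrix.add_apply]
    exact add_le_add_left (h12 i j) _
  -- the argument under sqrt is nonneg
  have hR0 : ‖ν₀‖ ≤ R := spectrum.norm_le_norm_of_mem hν₀
  have habs : |ν₀.re| ≤ ‖ν₀‖ := Complex.abs_re_le_norm ν₀
  have harg : 0 ≤ R^2 + 2*s*ν₀.re + s^2 := by nlinarith [abs_le.mp (habs.trans hR0), sq_nonneg (s + ν₀.re)]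
  set r : ℝ := Real.sqrt (R^2 + 2*s*ν₀.re + s^2) with hr
  have hrnn : 0 ≤ r := Real.sqrt_nonneg _
  -- μ + s in spectrum of B₁c
  have hmem : (s : ℂ) + μ ∈ spectrum ℂ (B₁.map Complex.ofReal) := by
    rw [hB₁, map_add_smul_one, ← spectrum.vadd_eq]
    exact Set.vadd_mem_vadd_set hμ
  have h1 : (‖(s : ℂ) + μ‖₊ : ℝ≥0∞) ≤ spectralRadius ℂ (B₁.map Complex.ofReal) :=
    le_iSup₂ (f := fun k (_ : k ∈ spectrum ℂ (B₁.map Complex.ofReal)) => (‖k‖₊ : ℝ≥0∞)) _ hmem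
  have h2 := specRadius_mono hB₁0 hB₁₂
  have h3 : spectralRadius ℂ (B₂.map Complex.ofReal) ≤ (r.toNNReal : ℝ≥0∞) := by
    refine iSup₂_le fun ξ hξ => ?_
    rw [hB₂, map_add_smul_one, ← spectrum.vadd_eq] at hξ
    obtain ⟨ν, hν, rfl⟩ := hξ
    have hνR : ‖ν‖ ≤ R := spectrum.norm_le_norm_of_mem hν
    have hνre : ν.re ≤ ν₀.re := hmax ν hν
    have hnorm : ‖(s : ℂ) +ᵥ ν‖ ≤ r := by
      rw [hr, show (s : ℂ) +ᵥ ν = (s : ℂ) + ν from rfl]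
      rw [Real.le_sqrt (norm_nonneg _) harg]
      have e1 : ‖(s : ℂ) + ν‖^2 = (s + ν.re)^2 + ν.im^2 := by
        rw [Complex.sq_norm, Complex.normSq_apply]
        simp; ring
      have e2 : ‖ν‖^2 = ν.re^2 + ν.im^2 := by
        rw [Complex.sq_norm, Complex.normSq_apply]; ring
      nlinarith [norm_nonneg ν, hνR, hνre, hs0, e1, e2]
    rw [ENNReal.coe_le_coe, ← NNReal.coe_le_coe, coe_nnnorm, Real.coe_toNNReal r hrnn]
    exact hnorm
  -- assemble
  have hchain : (‖(s : ℂ) + μ‖₊ : ℝ≥0∞) ≤ (r.toNNReal : ℝ≥0∞) := h1.trans (h2.trans h3)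
  have hle : ‖(s : ℂ) + μ‖ ≤ r := by
    rw [ENNReal.coe_le_coe, ← NNReal.coe_le_coe, coe_nnnorm, Real.coe_toNNReal r hrnn] at hchain
    exact hchain
  have hre2 : |((s : ℂ) + μ).re| ≤ ‖(s : ℂ) + μ‖ := Complex.abs_re_le_norm _
  have hz : ((s : ℂ) + μ).re = s + μ.re := by simp
  calc (s + μ.re)^2 = |s + μ.re|^2 := (sq_abs _).symm
    _ ≤ r^2 := by
        refine pow_le_pow_left₀ (abs_nonneg _) ?_ 2
        rw [← hz]; exact hre2.trans hle
    _ = R^2 + 2*s*ν₀.re + s^2 := Real.sq_sqrt harg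
end aux3

theorem metzlerPart_hurwitz_mono {n : ℕ} (A₁ A₂ : Matrix (Fin n) (Fin n) ℝ)
    (h : ∀ i j, metzlerPart A₁ i j ≤ metzlerPart A₂ i j)
    (h₂ : Hurwitz (metzlerPart A₂)) : Hurwitz (metzlerPart A₁) := by
  intro μ hμ
  by_contra hre
  push_neg at hre
  rcases Nat.eq_zero_or_pos n with hn | hn
  · subst hn
    haveI : Subsingleton (Matrix (Fin 0) (Fin 0) ℂ) :=
      ⟨fun a b => by ext i j; exact absurd i.2 (by omega)⟩
    exact (spectrum.mem_iff.mp hμ) (isUnit_of_subsingleton _)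
  haveI : Nonempty (Fin n) := ⟨⟨0, hn⟩⟩
  set M₁ := metzlerPart A₁ with hM₁
  set M₂ := metzlerPart A₂ with hM₂
  obtain ⟨ν₀, hν₀, hmaxOn⟩ := (spectrum.isCompact (M₂.map Complex.ofReal)).exists_isMaxOn
      (spectrum.nonempty _) (Complex.continuous_re.continuousOn)
  have hmax : ∀ ν ∈ spectrum ℂ (M₂.map Complex.ofReal), ν.re ≤ ν₀.re := fun ν hν => hmaxOn hν
  have hm : ν₀.re < 0 := h₂ ν₀ hν₀
  set R : ℝ := ‖M₂.map Complex.ofReal‖ with hR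
  have hd : ∀ i j : Fin n, i ≠ j → 0 ≤ M₁ i j := by
    intro i j hij
    simp only [hM₁, metzlerPart, Matrix.of_apply, if_neg hij]
    exact abs_nonneg _
  set s₀ : ℝ := ∑ i, |M₁ i i| with hs₀
  have hs₀0 : 0 ≤ s₀ := Finset.sum_nonneg fun i _ => abs_nonneg _
  have key : ∀ s : ℝ, s₀ ≤ s →
      (s + μ.re)^2 ≤ R^2 + 2*s*ν₀.re + s^2 := by
    intro s hss
    refine key_ineq hd h hμ hν₀ hmax (hs₀0.trans hss) fun i => ?_
    have h1 : |M₁ i i| ≤ s₀ :=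
      Finset.single_le_sum (f := fun i => |M₁ i i|) (fun i _ => abs_nonneg _) (Finset.mem_univ i)
    have := (abs_le.mp (h1.trans hss)).1
    linarith
  -- choose s large to get a contradiction
  set s : ℝ := s₀ + (R^2 + 1) / (2 * (μ.re - ν₀.re)) with hs
  have hpos : 0 < μ.re - ν₀.re := by linarith
  have hdiv : 0 < (R^2 + 1) / (2 * (μ.re - ν₀.re)) := by positivity
  have hk := key s (le_add_of_nonneg_right hdiv.le)
  have hsge : (R^2 + 1) / (2 * (μ.re - ν₀.re)) ≤ s := by
    rw [hs]; linarith
  have h2s : R^2 + 1 ≤ 2 * s * (μ.re - ν₀.re) := by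
    rw [div_le_iff₀ (by positivity)] at hsge
    linarith
  nlinarith [sq_nonneg μ.re, hs₀0, hk]
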